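/- For every integer n ≥ 3, the set 𝒦_n is a compact subset of ℝ. -/

import Mathlib

/-- The quadratic map `f_c(x) = x² + c`. -/
def fc (c : ℝ) : ℝ → ℝ := fun x => x ^ 2 + c

/-- The set `𝒦_n` of real parameters. -/
def Kset (n : ℕ) : Set ℝ :=
  {c : ℝ | c < 0 ∧ (∀ j : ℕ, 1 ≤ j → j ≤ n - 1 → 0 < (fc c)^[j] c) ∧
    ∀ k : ℕ, (fc c)^[n + 3 * k + 1] c < 0 ∧ 0 < (fc c)^[n + 3 * k + 2] c}

private lemma iter_succ (c : ℝ) (m : ℕ) :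
    (fc c)^[m + 1] c = ((fc c)^[m] c) ^ 2 + c := by
  rw [Function.iterate_succ_apply']; rfl

private lemma iter_one (c : ℝ) : (fc c)^[1] c = c ^ 2 + c := by
  simpa using iter_succ c 0

private lemma contIter (m : ℕ) : Continuous (fun c : ℝ => (fc c)^[m] c) := by
  induction m with
  | zero => exact continuous_id
  | succ m ih =>
    simp only [iter_succ]
    exact (ih.pow 2).add continuous_id

private lemma escape (c : ℝ) (hc : c < -2) (j : ℕ) : -c ≤ (fc c)^[j + 1] c := by
  induction j with
  | zero => rw [iter_one]; nlinarith
  | succ j ih =>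
    rw [iter_succ]
    nlinarith [mul_nonneg (by linarith : (0:ℝ) ≤ (fc c)^[j+1] c + c)
      (by linarith : (0:ℝ) ≤ (fc c)^[j+1] c - c)]

theorem stmt_2 (n : ℕ) (hn : 3 ≤ n) : IsCompact (Kset n) := by
  set S : Set ℝ := {c : ℝ | c ≤ -1 ∧ (∀ j : ℕ, 1 ≤ j → j ≤ n - 1 → 0 ≤ (fc c)^[j] c) ∧
    ∀ k : ℕ, (fc c)^[n + 3 * k + 1] c ≤ 0 ∧ 0 ≤ (fc c)^[n + 3 * k + 2] c} with hSdef
  have hKS : Kset n = S := by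
    ext c
    constructor
    · rintro ⟨hc0, hpos, hk⟩
      have h1 : 0 < (fc c)^[1] c := hpos 1 le_rfl (by omega)
      rw [iter_one] at h1
      refine ⟨by nlinarith, fun j hj1 hjn => (hpos j hj1 hjn).le,
        fun k => ⟨(hk k).1.le, (hk k).2.le⟩⟩
    · rintro ⟨hc1, hpos, hk⟩
      -- first, c < -1 strictly
      have h2 : 0 ≤ (fc c)^[2] c := hpos 2 (by omega) (by omega)
      have hclt : c < -1 := by
        rcases lt_or_eq_of_le hc1 with h | h
        · exact h
        · exfalso
          subst h
          have e2 : (fc (-1 : ℝ))^[2] (-1) = ((-1:ℝ)^2 + (-1))^2 + (-1) := by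
            rw [show (2:ℕ) = 1 + 1 from rfl, iter_succ, iter_one]
          rw [e2] at h2; norm_num at h2
      have hc2c : 0 < c ^ 2 + c := by nlinarith
      refine ⟨by linarith, ?_, fun k => ⟨?_, ?_⟩⟩
      · -- strict positivity on the first n-1 iterates
        intro j hj1 hjn
        rcases (hpos j hj1 hjn).eq_or_lt with heq | hlt
        · exfalso
          have hj1eq : (fc c)^[j + 1] c = c := by
            rw [iter_succ, ← heq]; ring
          by_cases hcase : j + 1 ≤ n - 1
          · have := hpos (j + 1) (by omega) hcase
            rw [hj1eq] at this; linarith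
          · have hjn' : j + 1 = n := by omega
            have hn1 : (fc c)^[n + 1] c ≤ 0 := by
              have := (hk 0).1
              simpa using this
            have hval : (fc c)^[n + 1] c = c ^ 2 + c := by
              rw [show n + 1 = (j + 1) + 1 by omega, iter_succ, hj1eq]
            rw [hval] at hn1; linarith
        · exact hlt
      · -- strict negativity at step n + 3k + 1
        rcases (hk k).1.lt_or_eq with h | h
        · exact h
        · exfalso
          have hval : (fc c)^[n + 3 * k + 2] c = c := by
            rw [show n + 3 * k + 2 = (n + 3 * k + 1) + 1 from rfl, iter_succ, h]; ring
          have := (hk k).2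
          rw [hval] at this; linarith
      · -- strict positivity at step n + 3k + 2
        rcases (hk k).2.eq_or_lt with heq | hlt
        · exfalso
          have h3 : (fc c)^[n + 3 * k + 3] c = c := by
            rw [show n + 3 * k + 3 = (n + 3 * k + 2) + 1 from rfl, iter_succ, ← heq]; ring
          have h4 : (fc c)^[n + 3 * (k + 1) + 1] c = c ^ 2 + c := by
            rw [show n + 3 * (k + 1) + 1 = (n + 3 * k + 3) + 1 by ring, iter_succ, h3]
          have := (hk (k + 1)).1
          rw [h4] at this; linarith
        · exact hlt
  have hclosed : IsClosed S := by
    have hS2 : S = {c : ℝ | c ≤ -1} ∩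
        ((⋂ j : ℕ, ⋂ (_ : 1 ≤ j), ⋂ (_ : j ≤ n - 1), {c : ℝ | 0 ≤ (fc c)^[j] c}) ∩
          ⋂ k : ℕ, ({c : ℝ | (fc c)^[n + 3 * k + 1] c ≤ 0} ∩
            {c : ℝ | 0 ≤ (fc c)^[n + 3 * k + 2] c})) := by
      ext c
      simp only [hSdef, Set.mem_setOf_eq, Set.mem_inter_iff, Set.mem_iInter]
    rw [hS2]
    refine (isClosed_le continuous_id continuous_const).inter (IsClosed.inter ?_ ?_)
    · exact isClosed_iInter fun j => isClosed_iInter fun _ => isClosed_iInter fun _ =>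
        isClosed_le continuous_const (contIter j)
    · exact isClosed_iInter fun k =>
        (isClosed_le (contIter _) continuous_const).inter
          (isClosed_le continuous_const (contIter _))
  have hsub : S ⊆ Set.Icc (-2 : ℝ) (-1) := by
    rintro c ⟨hc1, _, hk⟩
    refine ⟨?_, hc1⟩
    by_contra h
    push_neg at h
    have hesc := escape c h n
    have h0 := (hk 0).1
    simp only [Nat.mul_zero, Nat.add_zero] at h0
    linarith
  rw [hKS]
  exact isCompact_Icc.of_isClosed_subset hclosed hsub
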